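/- Let X : ℝ → ℝ be three times continuously differentiable with X(x₀) = X′(x₀) = X″(x₀) = 0 and X‴(x₀) ≠ 0. Then the equilibrium x₀ of the second-order equation x″ = ½ X′(x) is unstable: there exists ε > 0 such that for every δ > 0 there is a solution with |x(0) − x₀| < δ and |x′(0)| < δ whose trajectory reaches some time t > 0 (within its interval of existence) with |x(t) − x₀| ≥ ε. -/

import Mathlib

open Set Topology Filter

open Set Topology Filter

lemma aux_mono (X : ℝ → ℝ) (x₀ : ℝ) (hX : ContDiff ℝ 3 X)
    (h1 : deriv X x₀ = 0) (h2 : deriv (deriv X) x₀ = 0)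
    (h3 : 0 < deriv (deriv (deriv X)) x₀) :
    ∃ r > 0, MonotoneOn X (Set.Icc x₀ (x₀ + r)) := by
  have hX0 : ContDiff ℝ ((0 + 3 : ℕ) : ℕ) X := by exact_mod_cast hX
  have hX1 : ContDiff ℝ ((1 + 2 : ℕ) : ℕ) X := by exact_mod_cast hX
  have hk : Continuous (deriv (deriv (deriv X))) := by
    have := (ContDiff.iterate_deriv' 0 3 hX0).continuous
    exact this
  have hh : ContDiff ℝ 1 (deriv (deriv X)) := by
    have := ContDiff.iterate_deriv' 1 2 hX1
    exact_mod_cast this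
  have hhd : Differentiable ℝ (deriv (deriv X)) := hh.differentiable one_ne_zero
  have hgd : Differentiable ℝ (deriv X) := by
    have hX2 : ContDiff ℝ ((2 + 1 : ℕ) : ℕ) X := by exact_mod_cast hX
    have := ContDiff.iterate_deriv' 2 1 hX2
    exact this.differentiable (by norm_num)
  have hXd : Differentiable ℝ X := hX.differentiable (by norm_num)
  obtain ⟨r₀, hr₀, hball⟩ : ∃ r₀ > 0, ∀ y, dist y x₀ < r₀ → 0 < deriv (deriv (deriv X)) y := by
    have hev : ∀ᶠ y in 𝓝 x₀, 0 < deriv (deriv (deriv X)) y :=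
      (hk.tendsto x₀).eventually (eventually_gt_nhds h3)
    rw [Metric.eventually_nhds_iff] at hev
    obtain ⟨ρ, hρ, h⟩ := hev
    exact ⟨ρ, hρ, fun y hy => h hy⟩
  set D := Set.Icc x₀ (x₀ + r₀ / 2) with hD
  have hx₀D : x₀ ∈ D := left_mem_Icc.2 (by linarith)
  have hsub : ∀ x ∈ D, dist x x₀ < r₀ := by
    intro x hx
    rw [Real.dist_eq, abs_of_nonneg (by linarith [hx.1])]
    linarith [hx.2]
  have m2 : MonotoneOn (deriv (deriv X)) D :=
    monotoneOn_of_deriv_nonneg (convex_Icc _ _) hhd.continuous.continuousOn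
      hhd.differentiableOn
      (fun x hx => (hball x (hsub x (interior_subset hx))).le)
  have p2 : ∀ x ∈ D, 0 ≤ deriv (deriv X) x := fun x hx => by
    have := m2 hx₀D hx hx.1
    rw [h2] at this; exact this
  have m1 : MonotoneOn (deriv X) D :=
    monotoneOn_of_deriv_nonneg (convex_Icc _ _) hgd.continuous.continuousOn
      hgd.differentiableOn (fun x hx => p2 x (interior_subset hx))
  have p1 : ∀ x ∈ D, 0 ≤ deriv X x := fun x hx => by
    have := m1 hx₀D hx hx.1
    rw [h1] at this; exact this
  have m0 : MonotoneOn X D :=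
    monotoneOn_of_deriv_nonneg (convex_Icc _ _) hXd.continuous.continuousOn
      hXd.differentiableOn (fun x hx => p1 x (interior_subset hx))
  exact ⟨r₀ / 2, by positivity, m0⟩



lemma aux_anti (X : ℝ → ℝ) (x₀ : ℝ) (hX : ContDiff ℝ 3 X)
    (h1 : deriv X x₀ = 0) (h2 : deriv (deriv X) x₀ = 0)
    (h3 : deriv (deriv (deriv X)) x₀ < 0) :
    ∃ r > 0, AntitoneOn X (Set.Icc (x₀ - r) x₀) := by
  have hX0 : ContDiff ℝ ((0 + 3 : ℕ) : ℕ) X := by exact_mod_cast hX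
  have hX1 : ContDiff ℝ ((1 + 2 : ℕ) : ℕ) X := by exact_mod_cast hX
  have hk : Continuous (deriv (deriv (deriv X))) := by
    have := (ContDiff.iterate_deriv' 0 3 hX0).continuous
    exact this
  have hh : ContDiff ℝ 1 (deriv (deriv X)) := by
    have := ContDiff.iterate_deriv' 1 2 hX1
    exact_mod_cast this
  have hhd : Differentiable ℝ (deriv (deriv X)) := hh.differentiable one_ne_zero
  have hgd : Differentiable ℝ (deriv X) := by
    have hX2 : ContDiff ℝ ((2 + 1 : ℕ) : ℕ) X := by exact_mod_cast hX
    have := ContDiff.iterate_deriv' 2 1 hX2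
    exact this.differentiable (by norm_num)
  have hXd : Differentiable ℝ X := hX.differentiable (by norm_num)
  obtain ⟨r₀, hr₀, hball⟩ : ∃ r₀ > 0, ∀ y, dist y x₀ < r₀ → deriv (deriv (deriv X)) y < 0 := by
    have hev : ∀ᶠ y in 𝓝 x₀, deriv (deriv (deriv X)) y < 0 :=
      (hk.tendsto x₀).eventually (eventually_lt_nhds h3)
    rw [Metric.eventually_nhds_iff] at hev
    obtain ⟨ρ, hρ, h⟩ := hev
    exact ⟨ρ, hρ, fun y hy => h hy⟩
  set D := Set.Icc (x₀ - r₀ / 2) x₀ with hD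
  have hx₀D : x₀ ∈ D := right_mem_Icc.2 (by linarith)
  have hsub : ∀ x ∈ D, dist x x₀ < r₀ := by
    intro x hx
    rw [Real.dist_eq, abs_of_nonpos (by linarith [hx.2])]
    linarith [hx.1]
  have m2 : AntitoneOn (deriv (deriv X)) D :=
    antitoneOn_of_deriv_nonpos (convex_Icc _ _) hhd.continuous.continuousOn
      hhd.differentiableOn
      (fun x hx => (hball x (hsub x (interior_subset hx))).le)
  have p2 : ∀ x ∈ D, 0 ≤ deriv (deriv X) x := fun x hx => by
    have := m2 hx hx₀D hx.2
    rw [h2] at this; exact this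
  have m1 : MonotoneOn (deriv X) D :=
    monotoneOn_of_deriv_nonneg (convex_Icc _ _) hgd.continuous.continuousOn
      hgd.differentiableOn (fun x hx => p2 x (interior_subset hx))
  have p1 : ∀ x ∈ D, deriv X x ≤ 0 := fun x hx => by
    have := m1 hx hx₀D hx.2
    rw [h1] at this; exact this
  have m0 : AntitoneOn X D :=
    antitoneOn_of_deriv_nonpos (convex_Icc _ _) hXd.continuous.continuousOn
      hXd.differentiableOn (fun x hx => p1 x (interior_subset hx))
  exact ⟨r₀ / 2, by positivity, m0⟩



lemma key_construction (X : ℝ → ℝ) (x₀ r : ℝ) (hr : 0 < r) (hXd : Differentiable ℝ X)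
    (hmono : MonotoneOn X (Set.Icc x₀ (x₀ + r))) :
    ∃ ε > 0, ∀ δ > 0, ∃ (x v : ℝ → ℝ) (T : ℝ), 0 < T ∧
      (∀ t ∈ Set.Icc (0 : ℝ) T,
        HasDerivAt x (v t) t ∧ HasDerivAt v (deriv X (x t) / 2) t) ∧
      |x 0 - x₀| < δ ∧ |v 0| < δ ∧ ε ≤ |x T - x₀| := by
  have hXc : Continuous X := hXd.continuous
  refine ⟨r / 4, by positivity, fun δ hδ => ?_⟩
  set v0 : ℝ := min δ 1 / 2 with hv0def
  have hv0 : 0 < v0 := by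
    have h : 0 < min δ 1 := lt_min hδ one_pos
    positivity
  have hv0δ : v0 < δ := by
    rcases le_total δ 1 with h | h
    · simp only [hv0def, min_eq_left h]; linarith
    · simp only [hv0def, min_eq_right h]; linarith
  obtain ⟨η0, hη0, hXnear⟩ : ∃ η0 > 0, ∀ y, |y - x₀| < η0 → |X y - X x₀| < v0 ^ 2 / 2 := by
    obtain ⟨d, hd, h⟩ := Metric.continuousAt_iff.1 hXc.continuousAt (v0 ^ 2 / 2) (by positivity)
    refine ⟨d, hd, fun y hy => ?_⟩
    have := h (show dist y x₀ < d by rwa [Real.dist_eq])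
    rwa [Real.dist_eq] at this
  set η : ℝ := min η0 (min δ r) / 4 with hηdef
  have hη : 0 < η := by
    have h1 : 0 < min η0 (min δ r) := lt_min hη0 (lt_min hδ hr)
    positivity
  have hηη0 : η < η0 := by
    have h := min_le_left η0 (min δ r); rw [hηdef]; linarith
  have hηδ : η < δ := by
    have h := le_trans (min_le_right η0 (min δ r)) (min_le_left δ r); rw [hηdef]; linarith
  have hηr : η ≤ r / 4 := by
    have h := le_trans (min_le_right η0 (min δ r)) (min_le_right δ r); rw [hηdef]; linarith
  set A : ℝ := x₀ + η with hA
  set B : ℝ := x₀ + r / 2 with hB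
  set A' : ℝ := x₀ + η / 2 with hA'
  set B' : ℝ := x₀ + 3 * r / 4 with hB'
  clear_value v0 η A B A' B'
  have hAJ : A ∈ Icc x₀ (x₀ + r) := ⟨by rw [hA]; linarith, by rw [hA]; linarith⟩
  have hKJ : Icc A' B' ⊆ Icc x₀ (x₀ + r) :=
    Icc_subset_Icc (by rw [hA']; linarith) (by rw [hB']; linarith)
  have hA'B' : A' ≤ B' := by rw [hA', hB']; linarith
  set W : ℝ → ℝ := fun z => v0 ^ 2 + X z - X A with hWdef
  have hWc : Continuous W := (continuous_const.add hXc).sub continuous_const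
  have hWpos : ∀ z ∈ Icc x₀ (x₀ + r), v0 ^ 2 / 2 ≤ W z := by
    intro z hz
    rcases le_total z A with h | h
    · have h1 : X x₀ ≤ X z := hmono (left_mem_Icc.2 (by linarith)) hz hz.1
      have h2 : |X A - X x₀| < v0 ^ 2 / 2 := by
        apply hXnear
        rw [hA, add_sub_cancel_left, abs_of_pos hη]; exact hηη0
      have h3 := (abs_lt.1 h2).2
      simp only [hWdef]; linarith
    · have h1 : X A ≤ X z := hmono hAJ hz h
      have h4 : (0:ℝ) ≤ v0 ^ 2 := sq_nonneg v0
      simp only [hWdef]; linarith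
  have hsqrtpos : ∀ z ∈ Icc x₀ (x₀ + r), 0 < Real.sqrt (W z) := fun z hz =>
    Real.sqrt_pos.2 (lt_of_lt_of_le (by positivity) (hWpos z hz))
  set f : ℝ → ℝ := fun z => (Real.sqrt (W z))⁻¹ with hfdef
  have hfpos : ∀ z ∈ Icc x₀ (x₀ + r), 0 < f z := fun z hz => inv_pos.2 (hsqrtpos z hz)
  have hfc : ∀ z ∈ Icc x₀ (x₀ + r), ContinuousAt f z := fun z hz =>
    ((Real.continuous_sqrt.comp hWc).continuousAt).inv₀ (ne_of_gt (hsqrtpos z hz))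
  have hint : ∀ a ∈ Icc x₀ (x₀ + r), ∀ b ∈ Icc x₀ (x₀ + r),
      IntervalIntegrable f MeasureTheory.volume a b := by
    intro a ha b hb
    apply ContinuousOn.intervalIntegrable
    intro z hz
    exact (hfc z (Set.ordConnected_Icc.uIcc_subset ha hb hz)).continuousWithinAt
  set τ : ℝ → ℝ := fun x => ∫ t in A..x, f t with hτdef
  have hτd : ∀ x ∈ Icc x₀ (x₀ + r), HasDerivAt τ (f x) x := fun x hx =>
    intervalIntegral.integral_hasDerivAt_right (hint A hAJ x hx)
      (((Real.continuous_sqrt.comp hWc).measurable.inv.stronglyMeasurable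
        (f := f)).stronglyMeasurableAtFilter)
      (hfc x hx)
  have hτcont : ContinuousOn τ (Icc x₀ (x₀ + r)) := fun x hx =>
    (hτd x hx).continuousAt.continuousWithinAt
  have hτmono : StrictMonoOn τ (Icc x₀ (x₀ + r)) := by
    apply strictMonoOn_of_deriv_pos (convex_Icc _ _) hτcont
    intro x hx
    rw [interior_Icc] at hx
    rw [(hτd x (Ioo_subset_Icc_self hx)).deriv]
    exact hfpos x (Ioo_subset_Icc_self hx)
  have hA'K : A' ∈ Icc A' B' := left_mem_Icc.2 hA'B'
  have hB'K : B' ∈ Icc A' B' := right_mem_Icc.2 hA'B'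
  have hAK : A ∈ Icc A' B' := ⟨by rw [hA, hA']; linarith, by rw [hA, hB']; linarith⟩
  have hBK : B ∈ Icc A' B' := ⟨by rw [hB, hA']; linarith, by rw [hB, hB']; linarith⟩
  have hτA : τ A = 0 := intervalIntegral.integral_same
  set T : ℝ := τ B with hT
  clear_value T
  have hT0 : 0 < T := by
    rw [hT, ← hτA]
    exact hτmono (hKJ hAK) (hKJ hBK) (by rw [hA, hB]; linarith)
  have hτA'0 : τ A' < 0 := by
    rw [← hτA]
    exact hτmono (hKJ hA'K) (hKJ hAK) (by rw [hA, hA']; linarith)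
  have hTB' : T < τ B' := by
    rw [hT]; exact hτmono (hKJ hBK) (hKJ hB'K) (by rw [hB, hB']; linarith)
  have hsurj : Icc (τ A') (τ B') ⊆ τ '' Icc A' B' :=
    intermediate_value_Icc hA'B' (hτcont.mono hKJ)
  have hinj : Set.InjOn τ (Icc A' B') := hτmono.injOn.mono hKJ
  set xfun : ℝ → ℝ := Function.invFunOn τ (Icc A' B') with hxfdef
  have hleft : ∀ z ∈ Icc A' B', xfun (τ z) = z := fun z hz => hinj.leftInvOn_invFunOn hz
  have hmemr : ∀ y ∈ Icc (τ A') (τ B'), xfun y ∈ Icc A' B' ∧ τ (xfun y) = y := by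
    intro y hy
    obtain ⟨z, hz, hzy⟩ := hsurj hy
    exact ⟨Function.invFunOn_mem ⟨z, hz, hzy⟩, Function.invFunOn_eq ⟨z, hz, hzy⟩⟩
  have hcont : ∀ a ∈ Ioo (τ A') (τ B'), ContinuousAt xfun a := by
    intro a ha
    obtain ⟨hbK, hτb⟩ := hmemr a (Ioo_subset_Icc_self ha)
    set b := xfun a with hbdef
    clear_value b
    have hbA' : A' < b := by
      rcases eq_or_lt_of_le hbK.1 with h | h
      · exfalso; rw [← h] at hτb; exact (ne_of_lt ha.1) hτb
      · exact h
    have hbB' : b < B' := by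
      rcases eq_or_lt_of_le hbK.2 with h | h
      · exfalso; rw [h] at hτb; exact (ne_of_gt ha.2) hτb
      · exact h
    rw [Metric.continuousAt_iff]
    intro ε hε
    set ε' : ℝ := min ε (min (b - A') (B' - b)) / 2 with hε'def
    clear_value ε'
    have hε'pos : 0 < ε' := by
      have h := lt_min hε (lt_min (by linarith : (0:ℝ) < b - A') (by linarith : (0:ℝ) < B' - b))
      rw [hε'def]; positivity
    have k1 : min ε (min (b - A') (B' - b)) ≤ b - A' :=
      le_trans (min_le_right _ _) (min_le_left _ _)
    have k2 : min ε (min (b - A') (B' - b)) ≤ B' - b :=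
      le_trans (min_le_right _ _) (min_le_right _ _)
    have k3 : min ε (min (b - A') (B' - b)) ≤ ε := min_le_left _ _
    have hε'ε : ε' < ε := by rw [hε'def]; linarith
    have e1 : ε' ≤ (b - A') / 2 := by rw [hε'def]; linarith
    have e2 : ε' ≤ (B' - b) / 2 := by rw [hε'def]; linarith
    have hmKl : b - ε' ∈ Icc A' B' := ⟨by linarith, by linarith [hbK.2, hε'pos.le]⟩
    have hmKr : b + ε' ∈ Icc A' B' := ⟨by linarith [hbK.1, hε'pos.le], by linarith⟩
    have hτl : τ (b - ε') < a := by
      rw [← hτb]; exact hτmono (hKJ hmKl) (hKJ hbK) (by linarith)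
    have hτr : a < τ (b + ε') := by
      rw [← hτb]; exact hτmono (hKJ hbK) (hKJ hmKr) (by linarith)
    refine ⟨min (a - τ (b - ε')) (τ (b + ε') - a), lt_min (by linarith) (by linarith), ?_⟩
    intro t ht
    rw [Real.dist_eq] at ht ⊢
    have habs := abs_lt.1 ht
    have m1 := min_le_left (a - τ (b - ε')) (τ (b + ε') - a)
    have m2 := min_le_right (a - τ (b - ε')) (τ (b + ε') - a)
    have ht1 : τ (b - ε') < t := by linarith [habs.1]
    have ht2 : t < τ (b + ε') := by linarith [habs.2]
    have htIcc : t ∈ Icc (τ A') (τ B') := by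
      constructor
      · have := hτmono.monotoneOn (hKJ hA'K) (hKJ hmKl) hmKl.1; linarith
      · have := hτmono.monotoneOn (hKJ hmKr) (hKJ hB'K) hmKr.2; linarith
    obtain ⟨hxtK, hτxt⟩ := hmemr t htIcc
    have hl : b - ε' < xfun t := by
      by_contra hcon
      push_neg at hcon
      have := hτmono.monotoneOn (hKJ hxtK) (hKJ hmKl) hcon
      rw [hτxt] at this; linarith
    have hr' : xfun t < b + ε' := by
      by_contra hcon
      push_neg at hcon
      have := hτmono.monotoneOn (hKJ hmKr) (hKJ hxtK) hcon
      rw [hτxt] at this; linarith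
    rw [abs_lt]
    constructor <;> linarith
  have hxd : ∀ t ∈ Ioo (τ A') (τ B'), HasDerivAt xfun (Real.sqrt (W (xfun t))) t := by
    intro t ht
    obtain ⟨hxtK, hτxt⟩ := hmemr t (Ioo_subset_Icc_self ht)
    have h1 : HasDerivAt τ (f (xfun t)) (xfun t) := hτd _ (hKJ hxtK)
    have h2 : f (xfun t) ≠ 0 := ne_of_gt (hfpos _ (hKJ hxtK))
    have h3 : ∀ᶠ y in 𝓝 t, τ (xfun y) = y :=
      Filter.eventually_of_mem (isOpen_Ioo.mem_nhds ht)
        (fun y hy => (hmemr y (Ioo_subset_Icc_self hy)).2)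
    have h4 := HasDerivAt.of_local_left_inverse (hcont t ht) h1 h2 h3
    have h5 : (f (xfun t))⁻¹ = Real.sqrt (W (xfun t)) := by
      simp [hfdef]
    rwa [h5] at h4
  have hsub0T : ∀ t ∈ Icc (0 : ℝ) T, t ∈ Ioo (τ A') (τ B') := fun t ht =>
    ⟨lt_of_lt_of_le hτA'0 ht.1, lt_of_le_of_lt ht.2 hTB'⟩
  refine ⟨xfun, fun t => Real.sqrt (W (xfun t)), T, hT0, ?_, ?_, ?_, ?_⟩
  · intro t ht
    have htI := hsub0T t ht
    obtain ⟨hxtK, hτxt⟩ := hmemr t (Ioo_subset_Icc_self htI)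
    refine ⟨hxd t htI, ?_⟩
    have hW : HasDerivAt W (deriv X (xfun t)) (xfun t) := by
      have h := (hXd (xfun t)).hasDerivAt
      simpa [hWdef] using (h.const_add (v0 ^ 2)).sub_const (X A)
    have hcomp : HasDerivAt (fun s => W (xfun s))
        (deriv X (xfun t) * Real.sqrt (W (xfun t))) t := hW.comp t (hxd t htI)
    have hs : W (xfun t) ≠ 0 :=
      ne_of_gt (lt_of_lt_of_le (by positivity) (hWpos _ (hKJ hxtK)))
    have h6 := hcomp.sqrt hs
    convert h6 using 1
    have hsq : Real.sqrt (W (xfun t)) ≠ 0 := ne_of_gt (hsqrtpos _ (hKJ hxtK))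
    field_simp
  · have hx0 : xfun 0 = A := by rw [← hτA]; exact hleft A hAK
    rw [hx0, hA, add_sub_cancel_left, abs_of_pos hη]
    exact hηδ
  · have hx0 : xfun 0 = A := by rw [← hτA]; exact hleft A hAK
    have hWA : W A = v0 ^ 2 := by simp [hWdef]
    show |Real.sqrt (W (xfun 0))| < δ
    rw [hx0, hWA, Real.sqrt_sq hv0.le, abs_of_pos hv0]
    exact hv0δ
  · have hxT : xfun T = B := by rw [hT]; exact hleft B hBK
    rw [hxT, hB, add_sub_cancel_left, abs_of_pos (by positivity)]
    linarith


/-- Degenerate unstable case of Demchenko's analysis: if `X` is `C³` with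
`X(x₀) = X′(x₀) = X″(x₀) = 0` and `X‴(x₀) ≠ 0`, then the equilibrium `x₀` of
`x″ = ½X′(x)` is unstable: there is `ε > 0` such that arbitrarily close to `(x₀, 0)`
there start solutions which reach distance at least `ε` from `x₀` at some positive
time within their interval of existence. -/
theorem regular_precession_degenerate_unstable
    (X : ℝ → ℝ) (x₀ : ℝ) (hX : ContDiff ℝ 3 X)
    (h0 : X x₀ = 0) (h1 : deriv X x₀ = 0) (h2 : deriv (deriv X) x₀ = 0)
    (h3 : deriv (deriv (deriv X)) x₀ ≠ 0) :
    ∃ ε > 0, ∀ δ > 0, ∃ (x v : ℝ → ℝ) (T : ℝ), 0 < T ∧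
      (∀ t ∈ Set.Icc (0 : ℝ) T,
        HasDerivAt x (v t) t ∧ HasDerivAt v (deriv X (x t) / 2) t) ∧
      |x 0 - x₀| < δ ∧ |v 0| < δ ∧ ε ≤ |x T - x₀| := by
  rcases lt_or_gt_of_ne h3 with hc | hc
  · -- negative third derivative: reflect through `x₀`
    obtain ⟨r, hr, hanti⟩ := aux_anti X x₀ hX h1 h2 hc
    have hYd : Differentiable ℝ (fun y => X (2 * x₀ - y)) :=
      (hX.differentiable (by norm_num)).comp ((differentiable_const _).sub differentiable_id)
    have hYmono : MonotoneOn (fun y => X (2 * x₀ - y)) (Set.Icc x₀ (x₀ + r)) := by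
      intro a ha b hb hab
      have hu : 2 * x₀ - b ∈ Set.Icc (x₀ - r) x₀ := ⟨by linarith [hb.2], by linarith [hb.1]⟩
      have hv : 2 * x₀ - a ∈ Set.Icc (x₀ - r) x₀ := ⟨by linarith [ha.2], by linarith [ha.1]⟩
      exact hanti hu hv (by linarith)
    obtain ⟨ε, hε, hδall⟩ := key_construction (fun y => X (2 * x₀ - y)) x₀ r hr hYd hYmono
    refine ⟨ε, hε, fun δ hδ => ?_⟩
    obtain ⟨y, vy, T, hT, hode, hy0, hvy0, hyT⟩ := hδall δ hδ
    refine ⟨fun t => 2 * x₀ - y t, fun t => -vy t, T, hT, ?_, ?_, ?_, ?_⟩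
    · intro t ht
      obtain ⟨hdy, hdv⟩ := hode t ht
      refine ⟨hdy.const_sub _, ?_⟩
      have hneg : HasDerivAt (fun t => -vy t) (-(deriv (fun y => X (2 * x₀ - y)) (y t) / 2)) t := hdv.neg
      convert hneg using 1
      show deriv X (2 * x₀ - y t) / 2 = -(deriv (fun y => X (2 * x₀ - y)) (y t) / 2)
      rw [deriv_comp_const_sub]
      ring
    · show |2 * x₀ - y 0 - x₀| < δ
      have h : 2 * x₀ - y 0 - x₀ = -(y 0 - x₀) := by ring
      rw [h, abs_neg]; exact hy0
    · show |-vy 0| < δ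
      rw [abs_neg]; exact hvy0
    · show ε ≤ |2 * x₀ - y T - x₀|
      have h : 2 * x₀ - y T - x₀ = -(y T - x₀) := by ring
      rw [h, abs_neg]; exact hyT
  · obtain ⟨r, hr, hmono⟩ := aux_mono X x₀ hX h1 h2 hc
    exact key_construction X x₀ r hr (hX.differentiable (by norm_num)) hmono
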